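/- For α ∈ (0,1), the function g_α(x) = (1/π) · sin(απ) x^{α-1} / (x^{2α} + 2 cos(απ) x^α + 1) is a probability density on (0,∞), i.e., it is nonnegative and integrates to 1. -/

import Mathlib

open Real Set MeasureTheory Filter Topology

theorem boolean_stable_density_is_probability_density
    (α : ℝ) (hα : 0 < α) (hα' : α < 1) :
    (∀ x : ℝ, 0 < x →
        0 ≤ (1 / π) * (Real.sin (α * π) * x ^ (α - 1)) /
            (x ^ (2 * α) + 2 * Real.cos (α * π) * x ^ α + 1)) ∧
      ∫ x in Set.Ioi (0 : ℝ),
          (1 / π) * (Real.sin (α * π) * x ^ (α - 1)) /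
            (x ^ (2 * α) + 2 * Real.cos (α * π) * x ^ α + 1) = 1 := by
  have hπ : (0:ℝ) < π := Real.pi_pos
  set θ := α * π with hθdef
  have hθ0 : 0 < θ := mul_pos hα hπ
  have hθπ : θ < π := by
    have : α * π < 1 * π := by
      exact mul_lt_mul_of_pos_right hα' hπ
    simpa using this
  have hs : 0 < Real.sin θ := Real.sin_pos_of_pos_of_lt_pi hθ0 hθπ
  have hden : ∀ x : ℝ, 0 < x →
      x ^ (2*α) + 2 * Real.cos θ * x ^ α + 1
        = (x ^ α + Real.cos θ)^2 + (Real.sin θ)^2 := by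
    intro x hx
    have h2 : x ^ (2*α) = (x ^ α)^2 := by
      rw [show (2:ℝ)*α = α*2 by ring, Real.rpow_mul hx.le, Real.rpow_two]
    rw [h2]
    linear_combination - Real.sin_sq_add_cos_sq θ
  have hdenpos : ∀ x : ℝ, 0 < x →
      0 < x ^ (2*α) + 2 * Real.cos θ * x ^ α + 1 := by
    intro x hx
    rw [hden x hx]
    positivity
  have hnonneg : ∀ x : ℝ, 0 < x →
      0 ≤ (1 / π) * (Real.sin θ * x ^ (α - 1)) /
        (x ^ (2 * α) + 2 * Real.cos θ * x ^ α + 1) := by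
    intro x hx
    apply div_nonneg
    · have := Real.rpow_pos_of_pos hx (α - 1)
      positivity
    · exact (hdenpos x hx).le
  refine ⟨hnonneg, ?_⟩
  set F : ℝ → ℝ := fun x => (1/θ) * Real.arctan ((x ^ α + Real.cos θ)/Real.sin θ) with hF
  have hderiv : ∀ x ∈ Ioi (0:ℝ), HasDerivAt F
      ((1 / π) * (Real.sin θ * x ^ (α - 1)) /
        (x ^ (2 * α) + 2 * Real.cos θ * x ^ α + 1)) x := by
    intro x hx
    simp only [mem_Ioi] at hx
    have h1 : HasDerivAt (fun y : ℝ => y ^ α) (α * x ^ (α-1)) x :=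
      Real.hasDerivAt_rpow_const (Or.inl hx.ne')
    have h2 : HasDerivAt (fun y : ℝ => (y ^ α + Real.cos θ)/Real.sin θ)
        ((α * x^(α-1))/Real.sin θ) x := (h1.add_const _).div_const _
    have h3 := (Real.hasDerivAt_arctan ((x^α + Real.cos θ)/Real.sin θ)).comp x h2
    have h4 := h3.const_mul (1/θ)
    refine h4.congr_deriv ?_
    rw [hden x hx]
    have hkey : 1 + ((x^α + Real.cos θ)/Real.sin θ)^2
        = ((x^α + Real.cos θ)^2 + Real.sin θ^2)/Real.sin θ^2 := by
      field_simp
      ring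
    rw [hkey, hθdef]
    have hD : 0 < (x^α + Real.cos θ)^2 + Real.sin θ^2 := by positivity
    field_simp
  have htend : Tendsto F atTop (𝓝 ((1/θ) * (π/2))) := by
    have h1 : Tendsto (fun x : ℝ => (x ^ α + Real.cos θ)/Real.sin θ) atTop atTop := by
      exact (tendsto_atTop_add_const_right _ _ (tendsto_rpow_atTop hα)).atTop_div_const hs
    have h2 : Tendsto (fun x : ℝ => Real.arctan ((x ^ α + Real.cos θ)/Real.sin θ))
        atTop (𝓝 (π/2)) :=
      (Real.tendsto_arctan_atTop.mono_right nhdsWithin_le_nhds).comp h1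
    exact h2.const_mul _
  have hcont : ContinuousWithinAt F (Ici (0:ℝ)) 0 := by
    apply ContinuousAt.continuousWithinAt
    have h1 : ContinuousAt (fun y : ℝ => y ^ α) 0 :=
      Real.continuousAt_rpow_const 0 α (Or.inr hα.le)
    exact (Real.continuous_arctan.continuousAt.comp
      ((h1.add continuousAt_const).div_const _)).const_mul _
  have key := integral_Ioi_of_hasDerivAt_of_nonneg hcont hderiv
    (fun x hx => hnonneg x hx) htend
  rw [key, hF]
  have h0 : (0:ℝ) ^ α = 0 := Real.zero_rpow hα.ne'
  have harct : Real.arctan (Real.cos θ / Real.sin θ) = π/2 - θ := by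
    have ht : Real.tan (π/2 - θ) = Real.cos θ / Real.sin θ := by
      rw [Real.tan_eq_sin_div_cos, Real.sin_pi_div_two_sub, Real.cos_pi_div_two_sub]
    rw [← ht, Real.arctan_tan (by linarith) (by linarith)]
  simp only [h0, zero_add]
  rw [harct]
  field_simp
  ring
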